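/- arXiv:2601.21895 — 2 statements merged into one kernel-verified Lean document; each statement's English description precedes it below -/
import Mathlib

section
/- Let E be a real Hilbert space, M ⊆ E a nonempty closed convex Borel-measurable subset with metric projection Π_M, and p a Borel probability measure on E. Let κ be a Markov kernel on E (a measurable assignment x ↦ κ(x) of Borel probability measures on E) such that κ(x)(M) = 1 for every x ∈ E and κ(Π_M(x)) = κ(x) for every x ∈ E. Assume the function (x, y) ↦ ‖x − y‖ is integrable against p ⊗ κ. Then ∫_E ∫_E ‖x − y‖ dκ(x)(y) dp(x) ≥ ∫_E ∫_E ‖x − y‖ dκ(x)(y) dq(x), where q = (Π_M)_* p is the pushforward of p under Π_M. -/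
open MeasureTheory ProbabilityTheory

/-- Proposition 1 of the paper (kernel/stochastic-rewrite version).  Let `M` be a
nonempty closed convex measurable subset of a real Hilbert space with metric
projection `P`, `p` a Borel probability measure, and `κ` a Markov kernel with
`κ x M = 1` and `κ (P x) = κ x` for all `x`.  If `(x, y) ↦ ‖x − y‖` is
integrable against `p ⊗ κ`, then the expected reconstruction error under `p`
dominates the one under the pushforward `q = P_* p`. -/
theorem expected_reconstruction_error_ge_kernel
    {E : Type*} [NormedAddCommGroup E] [InnerProductSpace ℝ E] [CompleteSpace E]
    [MeasurableSpace E] [BorelSpace E]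
    (M : Set E) (hM : M.Nonempty) (hMclosed : IsClosed M) (hMconv : Convex ℝ M)
    (hMmeas : MeasurableSet M)
    (P : E → E) (hPmeas : Measurable P) (hPmem : ∀ x, P x ∈ M)
    (hPnear : ∀ x, ∀ y ∈ M, ‖x - P x‖ ≤ ‖x - y‖)
    (κ : Kernel E E) [IsMarkovKernel κ]
    (hκM : ∀ x, κ x M = 1)
    (hκP : ∀ x, κ (P x) = κ x)
    (p : Measure E) [IsProbabilityMeasure p]
    (hint : Integrable (fun z : E × E => ‖z.1 - z.2‖) (p.compProd κ)) :
    ∫ x, ∫ y, ‖x - y‖ ∂(κ x) ∂(p.map P) ≤ ∫ x, ∫ y, ‖x - y‖ ∂(κ x) ∂p := by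
  haveI : Nonempty M := ⟨⟨P 0, hPmem 0⟩⟩
  -- variational inequality for the projection
  have hproj : ∀ x, ∀ y ∈ M, (inner ℝ (x - P x) (y - P x) : ℝ) ≤ 0 := by
    intro x y hy
    have hinf : ‖x - P x‖ = ⨅ w : M, ‖x - w‖ := by
      refine le_antisymm (le_ciInf fun w => hPnear x w w.2) ?_
      have hbdd : BddBelow (Set.range fun w : M => ‖x - (w : E)‖) := by
        refine ⟨0, ?_⟩
        rintro _ ⟨w, rfl⟩
        exact norm_nonneg _
      exact ciInf_le hbdd ⟨P x, hPmem x⟩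
    exact (norm_eq_iInf_iff_real_inner_le_zero hMconv (hPmem x)).mp hinf y hy
  -- points of `M` are closer to the projection
  have hkey : ∀ x, ∀ y ∈ M, ‖P x - y‖ ≤ ‖x - y‖ := by
    intro x y hy
    have h := hproj x y hy
    have hsq : ‖P x - y‖ ^ 2 ≤ ‖x - y‖ ^ 2 := by
      have hx : x - y = (x - P x) + (P x - y) := by abel
      rw [hx, norm_add_sq_real]
      have hin : (0:ℝ) ≤ (inner ℝ (x - P x) (P x - y) : ℝ) := by
        have hrw : P x - y = -(y - P x) := by abel
        rw [hrw, inner_neg_right]; linarith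
      nlinarith [sq_nonneg ‖x - P x‖]
    nlinarith [norm_nonneg (P x - y), norm_nonneg (x - y)]
  -- almost-everywhere membership in `M` under κ x
  have haeM : ∀ x, ∀ᵐ y ∂(κ x), y ∈ M := by
    intro x
    rw [ae_iff]
    have : (κ x) Mᶜ = 0 := by
      rw [measure_compl hMmeas (measure_ne_top _ _), hκM x, measure_univ]
      simp
    exact this
  -- a.e. integrability in the second variable, and integrability of the outer integral
  have hiff := (Measure.integrable_compProd_iff hint.aestronglyMeasurable).mp hint
  have haeint : ∀ᵐ x ∂p, Integrable (fun y => ‖x - y‖) (κ x) := hiff.1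
  have hIright : Integrable (fun x => ∫ y, ‖x - y‖ ∂(κ x)) p := by
    simpa [abs_of_nonneg (norm_nonneg _)] using hiff.2
  -- pointwise inequality of inner integrals
  have hpt : ∀ᵐ x ∂p, ∫ y, ‖P x - y‖ ∂(κ x) ≤ ∫ y, ‖x - y‖ ∂(κ x) := by
    filter_upwards [haeint] with x hx
    have hle : ∀ᵐ y ∂(κ x), ‖P x - y‖ ≤ ‖x - y‖ := by
      filter_upwards [haeM x] with y hy using hkey x y hy
    have hintP : Integrable (fun y => ‖P x - y‖) (κ x) := by
      refine hx.mono' ?_ ?_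
      · exact ((continuous_const.sub continuous_id).norm).stronglyMeasurable.aestronglyMeasurable
      · filter_upwards [hle] with y hy
        simpa [abs_of_nonneg (norm_nonneg _)] using hy
    exact integral_mono_ae hintP hx hle
  set g : E → ℝ := fun x => ∫ y, ‖x - y‖ ∂(κ x) with hg
  by_cases hI : Integrable g (p.map P)
  · -- change variables through the pushforward
    have hmap : ∫ x, g x ∂(p.map P) = ∫ x, g (P x) ∂p :=
      integral_map hPmeas.aemeasurable hI.aestronglyMeasurable
    have hgP : ∀ x, g (P x) = ∫ y, ‖P x - y‖ ∂(κ x) := by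
      intro x; simp only [hg]; rw [hκP x]
    have hIleft : Integrable (fun x => g (P x)) p :=
      (integrable_map_measure hI.aestronglyMeasurable hPmeas.aemeasurable).mp hI
    calc ∫ x, g x ∂(p.map P) = ∫ x, g (P x) ∂p := hmap
      _ ≤ ∫ x, g x ∂p := by
          refine integral_mono_ae hIleft hIright ?_
          filter_upwards [hpt] with x hx
          rw [hgP x]; exact hx
  · -- if the left-hand side is not integrable, its integral is zero
    rw [integral_undef hI]
    exact integral_nonneg fun x => integral_nonneg fun y => norm_nonneg _
end

section
/- Let E be a real Hilbert space, M ⊆ E a nonempty closed convex subset with metric projection Π_M, p a Borel probability measure on E, and R : E → E a Borel-measurable map such that R(x) ∈ M for every x and R(Π_M(x)) = R(x) for every x. Assume x ↦ ‖x − R(x)‖ is p-integrable. If ∫_E ‖x − R(x)‖ dp(x) = ∫_E ‖x − R(x)‖ d((Π_M)_* p)(x), then p-almost every x satisfies x ∈ M. -/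
open MeasureTheory

theorem aux_inner_le_zero
    {E : Type*} [NormedAddCommGroup E] [InnerProductSpace ℝ E]
    (M : Set E) (hMconv : Convex ℝ M)
    (P : E → E) (hPmem : ∀ x, P x ∈ M)
    (hPnear : ∀ x, ∀ y ∈ M, ‖x - P x‖ ≤ ‖x - y‖)
    (x : E) : ∀ y ∈ M, inner ℝ (x - P x) (y - P x) ≤ (0 : ℝ) := by
  haveI : Nonempty M := ⟨⟨P x, hPmem x⟩⟩
  rw [← norm_eq_iInf_iff_real_inner_le_zero hMconv (hPmem x)]
  refine le_antisymm (le_ciInf fun w : M => hPnear x w.1 w.2) ?_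
  exact ciInf_le ⟨0, fun _ ⟨_, h⟩ => h ▸ norm_nonneg _⟩ (⟨P x, hPmem x⟩ : M)

theorem aux_pyth
    {E : Type*} [NormedAddCommGroup E] [InnerProductSpace ℝ E]
    (M : Set E) (hMconv : Convex ℝ M)
    (P : E → E) (hPmem : ∀ x, P x ∈ M)
    (hPnear : ∀ x, ∀ y ∈ M, ‖x - P x‖ ≤ ‖x - y‖)
    (x y : E) (hy : y ∈ M) :
    ‖x - P x‖ ^ 2 + ‖P x - y‖ ^ 2 ≤ ‖x - y‖ ^ 2 := by
  have h := aux_inner_le_zero M hMconv P hPmem hPnear x y hy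
  have hxy : x - y = (x - P x) + (P x - y) := by abel
  rw [hxy, @norm_add_sq_real]
  have hin : inner ℝ (x - P x) (P x - y) ≥ (0 : ℝ) := by
    have hrw : P x - y = -(y - P x) := by abel
    rw [hrw, inner_neg_right]; linarith
  nlinarith [norm_nonneg (x - P x), norm_nonneg (P x - y)]

/-- Equality condition in Proposition 1 of the paper.  With `M`, `P`, `R`, `p` as
in the deterministic version, if the expected reconstruction error under `p`
equals the one under the pushforward `q = P_* p`, then `p`-almost every `x`
lies in `M`. -/
theorem expected_reconstruction_error_eq_implies_ae_mem
    {E : Type*} [NormedAddCommGroup E] [InnerProductSpace ℝ E] [CompleteSpace E]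
    [MeasurableSpace E] [BorelSpace E]
    (M : Set E) (hM : M.Nonempty) (hMclosed : IsClosed M) (hMconv : Convex ℝ M)
    (P : E → E) (hPmeas : Measurable P) (hPmem : ∀ x, P x ∈ M)
    (hPnear : ∀ x, ∀ y ∈ M, ‖x - P x‖ ≤ ‖x - y‖)
    (R : E → E) (hRmeas : Measurable R) (hRM : ∀ x, R x ∈ M)
    (hRP : ∀ x, R (P x) = R x)
    (p : Measure E) [IsProbabilityMeasure p]
    (hint : Integrable (fun x => ‖x - R x‖) p)
    (heq : ∫ x, ‖x - R x‖ ∂p = ∫ x, ‖x - R x‖ ∂(p.map P)) :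
    ∀ᵐ x ∂p, x ∈ M := by
  have hkey : ∀ x : E, ‖P x - R x‖ ^ 2 ≤ ‖x - R x‖ ^ 2 - ‖x - P x‖ ^ 2 := fun x => by
    have := aux_pyth M hMconv P hPmem hPnear x (R x) (hRM x)
    linarith
  have hle : ∀ x : E, ‖P x - R x‖ ≤ ‖x - R x‖ := fun x => by
    have h := hkey x
    nlinarith [norm_nonneg (P x - R x), norm_nonneg (x - R x), sq_nonneg ‖x - P x‖]
  by_cases hfm : AEStronglyMeasurable (fun x => ‖x - R x‖) (p.map P)
  · have hmap : ∫ x, ‖x - R x‖ ∂(p.map P) = ∫ x, ‖P x - R x‖ ∂p := by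
      rw [integral_map hPmeas.aemeasurable hfm]
      simp_rw [hRP]
    have hmeas2 : AEStronglyMeasurable (fun x => ‖P x - R x‖) p := by
      have := hfm.comp_aemeasurable hPmeas.aemeasurable
      simpa [Function.comp_def, hRP] using this
    have hint2 : Integrable (fun x => ‖P x - R x‖) p := by
      refine Integrable.mono hint hmeas2 ?_
      filter_upwards with x
      simpa [abs_of_nonneg (norm_nonneg _)] using hle x
    have h3 : ∫ x, ‖x - R x‖ ∂p = ∫ x, ‖P x - R x‖ ∂p := heq.trans hmap
    have hzero : ∫ x, (‖x - R x‖ - ‖P x - R x‖) ∂p = 0 := by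
      rw [integral_sub hint hint2, h3, sub_self]
    have hnonneg : 0 ≤ᵐ[p] fun x => ‖x - R x‖ - ‖P x - R x‖ := by
      filter_upwards with x; simpa using hle x
    have hae : (fun x => ‖x - R x‖ - ‖P x - R x‖) =ᵐ[p] 0 :=
      (integral_eq_zero_iff_of_nonneg_ae hnonneg (hint.sub hint2)).mp hzero
    filter_upwards [hae] with x hx
    have hx' : ‖x - R x‖ - ‖P x - R x‖ = 0 := hx
    have hxeq : ‖x - R x‖ = ‖P x - R x‖ := by linarith
    have hsq : ‖x - P x‖ ^ 2 ≤ 0 := by have := hkey x; rw [hxeq] at this; linarith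
    have h0 : ‖x - P x‖ = 0 := by nlinarith [norm_nonneg (x - P x)]
    have hxP : x = P x := sub_eq_zero.mp (norm_eq_zero.mp h0)
    rw [hxP]; exact hPmem x
  · have h0 : ∫ x, ‖x - R x‖ ∂(p.map P) = 0 := integral_undef (fun h => hfm h.1)
    rw [h0] at heq
    have hnonneg : 0 ≤ᵐ[p] fun x => ‖x - R x‖ := by
      filter_upwards with x; positivity
    have hae : (fun x => ‖x - R x‖) =ᵐ[p] 0 :=
      (integral_eq_zero_iff_of_nonneg_ae hnonneg hint).mp heq
    filter_upwards [hae] with x hx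
    have hx' : ‖x - R x‖ = 0 := hx
    have hxR : x = R x := sub_eq_zero.mp (norm_eq_zero.mp hx')
    rw [hxR]; exact hRM x
end
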